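/- The function s ↦ (cosh s)^{-1/2} on ℝ has strictly positive Fourier transform: for every β ∈ ℝ, ∫_ℝ e^{-isβ} (cosh s)^{-1/2} ds > 0. -/

import Mathlib

open MeasureTheory

/-- The substitution map `(0,1) → ℝ`, inverse of `s ↦ e^{2s}/(1+e^{2s})`. -/
noncomputable def coshPsi (x : ℝ) : ℝ := (Real.log x - Real.log (1 - x)) / 2

lemma coshPsi_image : coshPsi '' Set.Ioo 0 1 = Set.univ := by
  apply Set.eq_univ_of_forall
  intro y
  have he : (0:ℝ) < Real.exp (2*y) := Real.exp_pos _
  have h1 : (0:ℝ) < 1 + Real.exp (2*y) := by positivity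
  refine ⟨Real.exp (2*y) / (1 + Real.exp (2*y)), ⟨by positivity, ?_⟩, ?_⟩
  · rw [div_lt_one h1]; linarith
  · have h2 : 1 - Real.exp (2*y) / (1 + Real.exp (2*y)) = 1 / (1 + Real.exp (2*y)) := by
      field_simp
      ring
    unfold coshPsi
    rw [h2, Real.log_div (Real.exp_ne_zero _) h1.ne', Real.log_div one_ne_zero h1.ne',
      Real.log_exp, Real.log_one]
    ring

lemma coshPsi_strictMono : StrictMonoOn coshPsi (Set.Ioo 0 1) := by
  intro a ha b hb hab
  have h1 : Real.log a < Real.log b := Real.log_lt_log ha.1 hab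
  have h2 : Real.log (1 - b) < Real.log (1 - a) :=
    Real.log_lt_log (by linarith [hb.2]) (by linarith)
  unfold coshPsi; linarith

lemma coshPsi_hasDeriv {x : ℝ} (hx : x ∈ Set.Ioo 0 1) :
    HasDerivAt coshPsi ((x⁻¹ + (1-x)⁻¹)/2) x := by
  have h1 : HasDerivAt Real.log x⁻¹ x := Real.hasDerivAt_log hx.1.ne'
  have hin : HasDerivAt (fun y : ℝ => 1 - y) (-1) x := (hasDerivAt_id x).const_sub 1
  have h2 : HasDerivAt (fun y => Real.log (1 - y)) ((1-x)⁻¹ * (-1)) x :=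
    (Real.hasDerivAt_log (by intro h; have := hx.2; linarith [h] : (1:ℝ) - x ≠ 0)).comp x hin
  have := (h1.sub h2).div_const 2
  exact this.congr_deriv (by ring)

lemma coshPsi_cosh {x : ℝ} (hx : x ∈ Set.Ioo (0:ℝ) 1) :
    Real.cosh (coshPsi x) = 2⁻¹ * (x * (1-x)) ^ (-(1:ℝ)/2) := by
  have hA : (0:ℝ) < x := hx.1
  have hB : (0:ℝ) < 1 - x := by linarith [hx.2]
  have h : (x*(1-x)) ^ (-(1:ℝ)/2)
      = Real.exp ((Real.log x + Real.log (1-x)) * (-(1:ℝ)/2)) := by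
    rw [Real.rpow_def_of_pos (by positivity), Real.log_mul hA.ne' hB.ne']
  rw [Real.cosh_eq, h]
  have e1 : Real.exp (coshPsi x) =
      Real.exp ((Real.log x + Real.log (1-x)) * (-(1:ℝ)/2)) * Real.exp (Real.log x) := by
    rw [← Real.exp_add]; congr 1; unfold coshPsi; ring
  have e2 : Real.exp (-coshPsi x) =
      Real.exp ((Real.log x + Real.log (1-x)) * (-(1:ℝ)/2)) * Real.exp (Real.log (1-x)) := by
    rw [← Real.exp_add]; congr 1; unfold coshPsi; ring
  rw [e1, e2, Real.exp_log hA, Real.exp_log hB]; ring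

lemma coshPsi_rpow {x : ℝ} (hx : x ∈ Set.Ioo (0:ℝ) 1) :
    Real.cosh (coshPsi x) ^ (-(1:ℝ)/2) = (2:ℝ)^((1:ℝ)/2) * (x*(1-x)) ^ ((1:ℝ)/4) := by
  have hA : (0:ℝ) < x := hx.1
  have hB : (0:ℝ) < 1 - x := by linarith [hx.2]
  rw [coshPsi_cosh hx, Real.mul_rpow (by norm_num) (by positivity)]
  congr 1
  · rw [← Real.rpow_neg_one (2:ℝ), ← Real.rpow_mul (by norm_num)]; norm_num
  · rw [← Real.rpow_mul (by positivity)]; norm_num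

lemma coshPsi_cexp (β : ℝ) {x : ℝ} (hx : x ∈ Set.Ioo (0:ℝ) 1) :
    Complex.exp (-Complex.I * (coshPsi x) * β) =
      (x:ℂ) ^ (-(Complex.I*β)/2) * ((1-x:ℝ):ℂ) ^ (Complex.I*β/2) := by
  have hA : (0:ℝ) < x := hx.1
  have hB : (0:ℝ) < 1 - x := by linarith [hx.2]
  rw [Complex.cpow_def_of_ne_zero (by exact_mod_cast hA.ne'),
      Complex.cpow_def_of_ne_zero (by exact_mod_cast hB.ne'),
      ← Complex.ofReal_log hA.le, ← Complex.ofReal_log hB.le, ← Complex.exp_add]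
  congr 1
  unfold coshPsi
  push_cast
  ring

lemma coshPsi_pointwise (β : ℝ) {x : ℝ} (hx : x ∈ Set.Ioo (0:ℝ) 1) :
    |(x⁻¹ + (1-x)⁻¹)/2| • (Complex.exp (-Complex.I * (coshPsi x) * β) *
        ((Real.cosh (coshPsi x) ^ (-(1:ℝ)/2) : ℝ) : ℂ)) =
      (((2:ℝ) ^ (-(1:ℝ)/2) : ℝ) : ℂ) *
        ((x:ℂ) ^ ((1/4 : ℂ) - Complex.I*β/2 - 1) *
          (1 - (x:ℂ)) ^ ((1/4:ℂ) + Complex.I*β/2 - 1)) := by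
  have hA : (0:ℝ) < x := hx.1
  have hB : (0:ℝ) < 1 - x := by linarith [hx.2]
  have hpos : (0:ℝ) < (x⁻¹ + (1-x)⁻¹)/2 := by positivity
  have hxc : (x:ℂ) ^ ((1/4 : ℂ) - Complex.I*β/2 - 1)
      = ((x ^ (-(3:ℝ)/4) : ℝ) : ℂ) * (x:ℂ) ^ (-(Complex.I*β)/2) := by
    rw [show ((1/4 : ℂ) - Complex.I*β/2 - 1) = ((-(3:ℝ)/4 : ℝ):ℂ) + (-(Complex.I*β)/2) by
      push_cast; ring]
    rw [Complex.cpow_add _ _ (by exact_mod_cast hA.ne'), Complex.ofReal_cpow hA.le]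
  have hBc : (1 - (x:ℂ)) ^ ((1/4:ℂ) + Complex.I*β/2 - 1)
      = (((1-x) ^ (-(3:ℝ)/4) : ℝ) : ℂ) * ((1-x:ℝ):ℂ) ^ (Complex.I*β/2) := by
    have hcast : (1 - (x:ℂ)) = ((1-x:ℝ):ℂ) := by push_cast; ring
    rw [hcast, show ((1/4 : ℂ) + Complex.I*β/2 - 1) = ((-(3:ℝ)/4 : ℝ):ℂ) + (Complex.I*β/2) by
      push_cast; ring]
    rw [Complex.cpow_add _ _ (by exact_mod_cast hB.ne'), Complex.ofReal_cpow hB.le]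
  have hreal : ((x⁻¹+(1-x)⁻¹)/2) * ((2:ℝ)^((1:ℝ)/2) * (x*(1-x)) ^ ((1:ℝ)/4))
      = (2:ℝ)^(-(1:ℝ)/2) * (x ^ (-(3:ℝ)/4) * (1-x) ^ (-(3:ℝ)/4)) := by
    rw [Real.mul_rpow hA.le hB.le,
      show (1:ℝ)/4 = 1 + (-(3:ℝ)/4) by norm_num,
      Real.rpow_add hA, Real.rpow_add hB, Real.rpow_one, Real.rpow_one,
      show ((1:ℝ)/2 : ℝ) = 1 + (-(1:ℝ)/2) by norm_num,
      Real.rpow_add (by norm_num : (0:ℝ) < 2), Real.rpow_one]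
    field_simp
    ring
  rw [Complex.real_smul, coshPsi_cexp β hx, coshPsi_rpow hx, hxc, hBc,
    abs_of_pos hpos]
  set P := (x:ℂ) ^ (-(Complex.I*β)/2)
  set Q := ((1-x:ℝ):ℂ) ^ (Complex.I*β/2)
  calc ((((x⁻¹+(1-x)⁻¹)/2 : ℝ)):ℂ) * (P * Q * ((((2:ℝ)^((1:ℝ)/2) * (x*(1-x)) ^ ((1:ℝ)/4)):ℝ):ℂ))
      = ((((x⁻¹+(1-x)⁻¹)/2) * ((2:ℝ)^((1:ℝ)/2) * (x*(1-x)) ^ ((1:ℝ)/4)) : ℝ):ℂ) * (P*Q) := by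
        push_cast; ring
    _ = (((2:ℝ)^(-(1:ℝ)/2) * (x ^ (-(3:ℝ)/4) * (1-x) ^ (-(3:ℝ)/4)) : ℝ):ℂ) * (P*Q) := by
        rw [hreal]
    _ = (((2:ℝ) ^ (-(1:ℝ)/2) : ℝ) : ℂ) *
        (((x ^ (-(3:ℝ)/4) : ℝ):ℂ) * P * ((((1-x) ^ (-(3:ℝ)/4) : ℝ):ℂ) * Q)) := by
        push_cast; ring

lemma coshPsi_integral_eq (β : ℝ) :
    (∫ s : ℝ, Complex.exp (-Complex.I * s * β) *
          ((Real.cosh s ^ (-(1:ℝ)/2) : ℝ) : ℂ))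
      = (((2:ℝ) ^ (-(1:ℝ)/2) : ℝ) : ℂ) *
        Complex.betaIntegral ((1/4 : ℂ) - Complex.I*β/2) ((1/4:ℂ) + Complex.I*β/2) := by
  have hderiv : ∀ x ∈ Set.Ioo (0:ℝ) 1,
      HasDerivWithinAt coshPsi ((fun x : ℝ => (x⁻¹+(1-x)⁻¹)/2) x) (Set.Ioo 0 1) x :=
    fun x hx => (coshPsi_hasDeriv hx).hasDerivWithinAt
  have h := integral_image_eq_integral_abs_deriv_smul measurableSet_Ioo hderiv
    coshPsi_strictMono.injOn
    (fun s => Complex.exp (-Complex.I * s * β) * ((Real.cosh s ^ (-(1:ℝ)/2) : ℝ) : ℂ))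
  rw [coshPsi_image, setIntegral_univ] at h
  rw [h]
  rw [setIntegral_congr_fun measurableSet_Ioo (fun x hx => coshPsi_pointwise β hx)]
  rw [MeasureTheory.integral_const_mul]
  congr 1
  rw [Complex.betaIntegral, intervalIntegral.integral_of_le zero_le_one,
      MeasureTheory.integral_Ioc_eq_integral_Ioo]

lemma coshPsi_beta_pos (β : ℝ) (u v : ℂ) (hu : u = (1/4 : ℂ) - Complex.I*β/2)
    (hv : v = (1/4:ℂ) + Complex.I*β/2) :
    ∃ r : ℝ, 0 < r ∧ Complex.betaIntegral u v = (r : ℂ) := by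
  have hure : 0 < u.re := by simp [hu]
  have hvre : 0 < v.re := by simp [hv]
  have huv : u + v = 1/2 := by rw [hu, hv]; ring
  have hG12 : Complex.Gamma (1/2) = (Real.sqrt Real.pi : ℂ) := by
    rw [Complex.Gamma_one_half_eq, Real.sqrt_eq_rpow, Complex.ofReal_cpow Real.pi_pos.le]
    norm_num
  have hconj : v = (starRingEnd ℂ) u := by
    rw [hu, hv]
    simp only [map_sub, map_add, map_div₀, map_mul, Complex.conj_I, Complex.conj_ofReal,
      map_one, map_ofNat]
    ring
  have hGu_ne : Complex.Gamma u ≠ 0 := by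
    apply Complex.Gamma_ne_zero
    intro m h
    apply_fun Complex.re at h
    simp [hu] at h
    have : (0:ℝ) ≤ (m:ℝ) := Nat.cast_nonneg m
    linarith
  have hbeta := Complex.Gamma_mul_Gamma_eq_betaIntegral hure hvre
  rw [huv, hG12] at hbeta
  have hsq : Complex.Gamma u * Complex.Gamma v
      = ((Complex.normSq (Complex.Gamma u) : ℝ) : ℂ) := by
    rw [hconj, Complex.Gamma_conj, Complex.mul_conj]
  have hs : ((Real.sqrt Real.pi : ℝ) : ℂ) ≠ 0 := by
    exact_mod_cast (Real.sqrt_pos.mpr Real.pi_pos).ne'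
  refine ⟨Complex.normSq (Complex.Gamma u) / Real.sqrt Real.pi, ?_, ?_⟩
  · exact div_pos (Complex.normSq_pos.mpr hGu_ne) (Real.sqrt_pos.mpr Real.pi_pos)
  · rw [hsq] at hbeta
    push_cast
    field_simp
    linear_combination -hbeta

/-- The function `s ↦ (cosh s)^{-1/2}` has strictly positive Fourier transform:
for every `β ∈ ℝ`, the integral `∫ e^{-isβ}(cosh s)^{-1/2} ds` is a strictly
positive real number. -/
theorem cosh_rpow_fourier_positive (β : ℝ) :
    0 < (∫ s : ℝ, Complex.exp (-Complex.I * s * β) *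
          (Real.cosh s ^ (-(1 : ℝ) / 2) : ℝ)).re ∧
    (∫ s : ℝ, Complex.exp (-Complex.I * s * β) *
          (Real.cosh s ^ (-(1 : ℝ) / 2) : ℝ)).im = 0 := by
  obtain ⟨r, hr, hbeta⟩ := coshPsi_beta_pos β _ _ rfl rfl
  have key := coshPsi_integral_eq β
  rw [hbeta, ← Complex.ofReal_mul] at key
  rw [key]
  have h2 : (0:ℝ) < (2:ℝ)^(-(1:ℝ)/2) := Real.rpow_pos_of_pos (by norm_num) _
  exact ⟨by rw [Complex.ofReal_re]; exact mul_pos h2 hr, Complex.ofReal_im _⟩
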